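/- Let ω be a Hermitian metric and Ω a real (n-1,n-1)-form on a compact complex n-manifold. For t small, let γ_t be the unique positive definite (1,1)-form with (γ_t)_{n-1} = ω_{n-1} + tΩ (the Michelsohn (n-1)-st root). Then the derivative ρ := dγ_t/dt|_{t=0} is given by ρ = (1/(n-1)) Λ_ω(⋆_ω Ω) ω − ⋆_ω Ω. -/

import Mathlib

/-!
STATEMENT 17 (pointwise coordinate model, as in the paper's proof).
At a point, in coordinates diagonalising ω and Ω, write `ω = Σ_j i dz_j∧dz̄_j` and
`Ω = Σ_j Ω_j (i dz_j∧dz̄_j)^` ; then `ω_{n-1} + tΩ = Σ_j (1+tΩ_j) (i dz_j∧dz̄_j)^`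
and its Michelsohn `(n-1)`-st root is
`γ_t = Σ_j ( Π_k (1+tΩ_k)^{1/(n-1)} / (1+tΩ_j) ) i dz_j∧dz̄_j`.
Since `⋆_ω Ω = Σ_j Ω_j i dz_j∧dz̄_j` and `Λ_ω(⋆_ω Ω) = Σ_k Ω_k`, the claimed formula
`ρ = dγ_t/dt|_{t=0} = (1/(n-1)) Λ_ω(⋆_ω Ω) ω − ⋆_ω Ω` says exactly that for every `j`
the `j`-th diagonal coefficient of `dγ_t/dt|_{t=0}` equals `(Σ_k Ω_k)/(n-1) − Ω_j`.
-/
theorem stmt_17 (n : ℕ) (hn : 2 ≤ n) (Ω : Fin n → ℝ) (j : Fin n) :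
    HasDerivAt
      (fun t : ℝ => (∏ k, (1 + t * Ω k) ^ (((n : ℝ) - 1)⁻¹)) / (1 + t * Ω j))
      ((∑ k, Ω k) / ((n : ℝ) - 1) - Ω j) 0 := by
  set c : ℝ := ((n : ℝ) - 1)⁻¹
  have hfac : ∀ k : Fin n, HasDerivAt (fun t : ℝ => (1 + t * Ω k) ^ c) (c * Ω k) 0 := by
    intro k
    have h1 : HasDerivAt (fun t : ℝ => 1 + t * Ω k) (Ω k) 0 := by
      simpa using (hasDerivAt_id (0:ℝ)).mul_const (Ω k) |>.const_add 1
    have h2 := h1.rpow_const (p := c) (by norm_num)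
    simpa [mul_comm] using h2
  have hprod : HasDerivAt (fun t : ℝ => ∏ k, (1 + t * Ω k) ^ c) (∑ k, c * Ω k) 0 :=
    by simpa using HasDerivAt.fun_finsetProd (u := Finset.univ) fun k _ => hfac k
  have hden : HasDerivAt (fun t : ℝ => 1 + t * Ω j) (Ω j) 0 := by
    simpa using (hasDerivAt_id (0:ℝ)).mul_const (Ω j) |>.const_add 1
  have h := hprod.fun_div hden (by norm_num)
  refine h.congr_deriv (Eq.symm ?_)
  simp [c, div_eq_mul_inv, Finset.sum_mul, mul_comm]
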